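/- Let a : ℂ → ℂ be meromorphic on a domain containing a simple closed contour C, such that 1/(1+a(ω)) has only simple poles inside C, located at λ₁,…,λ_N, with residues 1/a'(λ_j). Then for any function F(ω₁,…,ω_n) holomorphic on and inside C^n, symmetric in its arguments, and vanishing whenever two arguments coincide, one has (1/n!)∮_{C^n} ∏_{j=1}^n dω_j/(2πi(1+a(ω_j))) · F(ω₁,…,ω_n) = Σ_{S⊆{1,…,N}, |S|=n} F((λ_j)_{j∈S}) / ∏_{j∈S} a'(λ_j). -/

import Mathlib

open Metric

/-- Iterated circle contour integral over `n` variables. -/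
noncomputable def iterCircleInt (c : ℂ) (R : ℝ) : (n : ℕ) → ((Fin n → ℂ) → ℂ) → ℂ
  | 0, F => F ![]
  | n + 1, F => ∮ z in C(c, R), iterCircleInt c R n (fun w => F (Fin.cons z w))


open Finset Complex

private lemma circleIntegrable_finsum {ι : Type*} (s : Finset ι) (f : ι → ℂ → ℂ) {c : ℂ} {R : ℝ}
    (h : ∀ i ∈ s, CircleIntegrable (f i) c R) :
    CircleIntegrable (fun z => ∑ i ∈ s, f i z) c R := by
  classical
  induction s using Finset.induction_on with
  | empty => simpa using circleIntegrable_const (0 : ℂ) c R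
  | insert x s hx ih =>
      simp only [Finset.sum_insert hx]
      exact (h _ (mem_insert_self _ _)).add (ih fun i hi => h i (mem_insert_of_mem hi))

private lemma circleIntegral_add' {f g : ℂ → ℂ} {c : ℂ} {R : ℝ} (hf : CircleIntegrable f c R)
    (hg : CircleIntegrable g c R) :
    (∮ z in C(c, R), (f z + g z)) = (∮ z in C(c, R), f z) + ∮ z in C(c, R), g z := by
  simp only [circleIntegral, smul_add, intervalIntegral.integral_add hf.out hg.out]

private lemma circleIntegral_finsum {ι : Type*} (s : Finset ι) (f : ι → ℂ → ℂ) {c : ℂ} {R : ℝ}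
    (h : ∀ i ∈ s, CircleIntegrable (f i) c R) :
    (∮ z in C(c, R), ∑ i ∈ s, f i z) = ∑ i ∈ s, ∮ z in C(c, R), f i z := by
  classical
  induction s using Finset.induction_on with
  | empty => simp [circleIntegral]
  | insert x s hx ih =>
      simp only [Finset.sum_insert hx]
      rw [circleIntegral_add' (h _ (mem_insert_self _ _))
        (circleIntegrable_finsum _ _ fun i hi => h i (mem_insert_of_mem hi)),
        ih fun i hi => h i (mem_insert_of_mem hi)]

private lemma key_int (c : ℂ) (R : ℝ) (hR : 0 < R) {N : ℕ} (a : ℂ → ℂ)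
    (lam : Fin N → ℂ) (hlam : ∀ j, lam j ∈ ball c R)
    (g : ℂ → ℂ) (hg : DifferentiableOn ℂ g (closedBall c R))
    (hpoles : ∀ z ∈ closedBall c R, (∀ j, z ≠ lam j) →
      1 / (1 + a z) = g z + ∑ j, 1 / (deriv a (lam j) * (z - lam j)))
    (h : ℂ → ℂ) (hh : DifferentiableOn ℂ h (closedBall c R)) :
    (∮ z in C(c, R), h z * (1 / (2 * Real.pi * Complex.I * (1 + a z)))) =
      ∑ j, h (lam j) / deriv a (lam j) := by
  have h2pi : (2 * Real.pi * Complex.I : ℂ) ≠ 0 := by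
    simp [Real.pi_ne_zero, Complex.I_ne_zero]
  set D : Fin N → ℂ := fun j => deriv a (lam j) with hD
  have hsne : ∀ z ∈ sphere c R, ∀ j, z ≠ lam j := by
    intro z hz j hzj
    have h1 : dist (lam j) c < R := mem_ball.mp (hlam j)
    have h2 : dist z c = R := mem_sphere.mp hz
    rw [hzj] at h2
    exact absurd h2 (ne_of_lt h1)
  have heq : Set.EqOn (fun z => h z * (1 / (2 * Real.pi * Complex.I * (1 + a z))))
      (fun z => (2 * Real.pi * Complex.I : ℂ)⁻¹ * (g z * h z) +
        ∑ j, ((2 * Real.pi * Complex.I : ℂ)⁻¹ * (D j)⁻¹) * ((z - lam j)⁻¹ * h z))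
      (sphere c R) := by
    intro z hz
    have hp := hpoles z (sphere_subset_closedBall hz) (hsne z hz)
    simp only [one_div, mul_inv] at hp
    show h z * (1 / (2 * Real.pi * Complex.I * (1 + a z))) = _
    rw [one_div, mul_inv, hp, mul_add, mul_add, Finset.mul_sum, Finset.mul_sum]
    congr 1
    · ring
    · exact Finset.sum_congr rfl fun j _ => by ring
  rw [circleIntegral.integral_congr hR.le heq]
  have hhc : ContinuousOn h (sphere c R) :=
    (hh.continuousOn).mono sphere_subset_closedBall
  have hint1 : CircleIntegrable
      (fun z => (2 * Real.pi * Complex.I : ℂ)⁻¹ * (g z * h z)) c R :=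
    (continuousOn_const.mul (((hg.continuousOn).mono sphere_subset_closedBall).mul
      hhc)).circleIntegrable hR.le
  have hint2 : ∀ j : Fin N, CircleIntegrable
      (fun z => ((2 * Real.pi * Complex.I : ℂ)⁻¹ * (D j)⁻¹) * ((z - lam j)⁻¹ * h z)) c R := by
    intro j
    refine (continuousOn_const.mul (ContinuousOn.mul ?_ hhc)).circleIntegrable hR.le
    exact ((continuousOn_id.sub continuousOn_const).inv₀ fun z hz =>
      sub_ne_zero.mpr (hsne z hz j))
  rw [circleIntegral_add' hint1 (circleIntegrable_finsum _ _ fun j _ => hint2 j),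
    circleIntegral_finsum _ _ fun j _ => hint2 j]
  have hz1 : (∮ z in C(c, R), (2 * Real.pi * Complex.I : ℂ)⁻¹ * (g z * h z)) = 0 := by
    rw [circleIntegral.integral_const_mul]
    rw [show (∮ z in C(c, R), g z * h z) = ∮ z in C(c, R), (g * h) z from rfl,
      Complex.circleIntegral_eq_zero_of_differentiable_on_off_countable hR.le
      Set.countable_empty ((hg.mul hh).continuousOn)
      (fun z hz => (hg.mul hh).differentiableAt
        (Filter.mem_of_superset (isOpen_ball.mem_nhds hz.1) ball_subset_closedBall))]
    ring
  rw [hz1, zero_add]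
  refine Finset.sum_congr rfl fun j _ => ?_
  rw [circleIntegral.integral_const_mul]
  have := hh.circleIntegral_sub_inv_smul (hlam j)
  simp only [smul_eq_mul] at this
  rw [this]
  calc ((2 * Real.pi * Complex.I : ℂ)⁻¹ * (D j)⁻¹) * (2 * Real.pi * Complex.I * h (lam j))
      = (2 * Real.pi * Complex.I * (2 * Real.pi * Complex.I : ℂ)⁻¹) * (h (lam j) * (D j)⁻¹) := by
        ring
    _ = h (lam j) / D j := by rw [mul_inv_cancel₀ h2pi, one_mul, div_eq_mul_inv]

private lemma iterCircleInt_const_mul (c : ℂ) (R : ℝ) :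
    ∀ (n : ℕ) (k : ℂ) (F : (Fin n → ℂ) → ℂ),
      iterCircleInt c R n (fun w => k * F w) = k * iterCircleInt c R n F
  | 0, k, F => rfl
  | n + 1, k, F => by
    show (∮ z in C(c, R), iterCircleInt c R n (fun w => k * F (Fin.cons z w))) = _
    rw [show (iterCircleInt c R (n+1) F) = ∮ z in C(c, R),
        iterCircleInt c R n (fun w => F (Fin.cons z w)) from rfl,
      ← circleIntegral.integral_const_mul]
    exact congrArg (fun f => circleIntegral f c R)
      (funext fun z => iterCircleInt_const_mul c R n k _)

private lemma iterCircleInt_succ (c : ℂ) (R : ℝ) (n : ℕ) (F : (Fin (n+1) → ℂ) → ℂ) :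
    iterCircleInt c R (n+1) F =
      ∮ z in C(c, R), iterCircleInt c R n (fun w => F (Fin.cons z w)) := rfl

set_option maxHeartbeats 1000000 in
private lemma iter_eq (c : ℂ) (R : ℝ) (hR : 0 < R) {N : ℕ} (a : ℂ → ℂ)
    (lam : Fin N → ℂ) (hlam : ∀ j, lam j ∈ ball c R)
    (g : ℂ → ℂ) (hg : DifferentiableOn ℂ g (closedBall c R))
    (hpoles : ∀ z ∈ closedBall c R, (∀ j, z ≠ lam j) →
      1 / (1 + a z) = g z + ∑ j, 1 / (deriv a (lam j) * (z - lam j))) :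
    ∀ (n : ℕ) (F : (Fin n → ℂ) → ℂ),
      (∀ (i : Fin n) (w : Fin n → ℂ), (∀ j, w j ∈ closedBall c R) →
        DifferentiableOn ℂ (fun z => F (Function.update w i z)) (closedBall c R)) →
      iterCircleInt c R n
          (fun w => F w * ∏ j, 1 / (2 * Real.pi * Complex.I * (1 + a (w j)))) =
        ∑ f : Fin n → Fin N, F (lam ∘ f) * ∏ i, (deriv a (lam (f i)))⁻¹ := by
  intro n
  induction n with
  | zero =>
      intro F _
      have h1 : ∀ f : Fin 0 → Fin N, lam ∘ f = ![] := fun f => funext fun i => i.elim0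
      have h2 : iterCircleInt c R 0
          (fun w => F w * ∏ j, 1 / (2 * Real.pi * Complex.I * (1 + a (w j)))) = F ![] := by
        show F ![] * ∏ j : Fin 0, _ = F ![]
        simp
      have h3 : ∑ f : Fin 0 → Fin N, F (lam ∘ f) * ∏ i : Fin 0, (deriv a (lam (f i)))⁻¹ =
          ∑ _f : Fin 0 → Fin N, F ![] :=
        Finset.sum_congr rfl fun f _ => by rw [h1 f]; simp
      rw [h2, h3, Finset.sum_const, Finset.card_univ]
      simp
  | succ n ih =>
      intro F hFhol
      have hccb : c ∈ closedBall c R := mem_closedBall_self hR.le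
      have hmemcons : ∀ (z : ℂ), z ∈ closedBall c R → ∀ (v : Fin n → ℂ),
          (∀ j, v j ∈ closedBall c R) →
          ∀ j, (Fin.cons z v : Fin (n+1) → ℂ) j ∈ closedBall c R := by
        intro z hz v hv j
        refine Fin.cases ?_ ?_ j
        · simpa using hz
        · intro i; simpa using hv i
      have hlamcb : ∀ j, lam j ∈ closedBall c R := fun j => ball_subset_closedBall (hlam j)
      set h : ℂ → ℂ := fun z => ∑ f : Fin n → Fin N,
        F (Fin.cons z (lam ∘ f)) * ∏ i, (deriv a (lam (f i)))⁻¹ with hhdef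
      have hhdiff : DifferentiableOn ℂ h (closedBall c R) := by
        refine DifferentiableOn.fun_sum fun f _ => DifferentiableOn.mul_const ?_ _
        have hexp : (fun z => F (Fin.cons z (lam ∘ f))) =
            fun z => F (Function.update (Fin.cons c (lam ∘ f)) 0 z) := by
          funext z
          rw [Fin.update_cons_zero]
        rw [hexp]
        exact hFhol 0 (Fin.cons c (lam ∘ f)) (hmemcons c hccb _ (fun j => hlamcb (f j)))
      have hstep : iterCircleInt c R (n+1)
          (fun w => F w * ∏ j, 1 / (2 * Real.pi * Complex.I * (1 + a (w j)))) =
          ∮ z in C(c, R), h z * (1 / (2 * Real.pi * Complex.I * (1 + a z))) := by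
        rw [iterCircleInt_succ]
        refine circleIntegral.integral_congr hR.le ?_
        intro z hz
        have hzcb : z ∈ closedBall c R := sphere_subset_closedBall hz
        have hre : (fun w : Fin n → ℂ => F (Fin.cons z w) *
              ∏ j : Fin (n+1), 1 / (2 * Real.pi * Complex.I * (1 + a ((Fin.cons z w : Fin (n+1) → ℂ) j)))) =
            fun w => (1 / (2 * Real.pi * Complex.I * (1 + a z))) * (F (Fin.cons z w) *
              ∏ j : Fin n, 1 / (2 * Real.pi * Complex.I * (1 + a (w j)))) := by
          funext w
          rw [Fin.prod_univ_succ]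
          simp only [Fin.cons_zero, Fin.cons_succ]
          ring
        show iterCircleInt c R n _ = _
        rw [hre, iterCircleInt_const_mul]
        have hihhyp : ∀ (i : Fin n) (w : Fin n → ℂ), (∀ j, w j ∈ closedBall c R) →
            DifferentiableOn ℂ (fun ζ => F (Fin.cons z (Function.update w i ζ)))
              (closedBall c R) := by
          intro i w hw
          have : (fun ζ => F (Fin.cons z (Function.update w i ζ))) =
              fun ζ => F (Function.update (Fin.cons z w) i.succ ζ) := by
            funext ζ
            rw [Fin.cons_update]
          rw [this]
          exact hFhol i.succ (Fin.cons z w) (hmemcons z hzcb w hw)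
        rw [ih (fun w => F (Fin.cons z w)) hihhyp]
        rw [mul_comm]
      rw [hstep, key_int c R hR a lam hlam g hg hpoles h hhdiff]
      rw [← Equiv.sum_comp (Fin.consEquiv (fun _ : Fin (n+1) => Fin N))
        (fun f : Fin (n+1) → Fin N => F (lam ∘ f) * ∏ i, (deriv a (lam (f i)))⁻¹)]
      rw [Fintype.sum_prod_type]
      refine Finset.sum_congr rfl fun j _ => ?_
      rw [hhdef]
      rw [Finset.sum_div]
      refine Finset.sum_congr rfl fun f _ => ?_
      have h1 : lam ∘ (Fin.consEquiv (fun _ : Fin (n+1) => Fin N) (j, f)) =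
          Fin.cons (lam j) (lam ∘ f) := by
        funext i
        refine Fin.cases ?_ ?_ i
        · rfl
        · intro i; rfl
      have h2 : ∏ i : Fin (n+1),
          (deriv a (lam ((Fin.consEquiv (fun _ : Fin (n+1) => Fin N) (j, f)) i)))⁻¹ =
          (deriv a (lam j))⁻¹ * ∏ i : Fin n, (deriv a (lam (f i)))⁻¹ := by
        rw [Fin.prod_univ_succ]
        rfl
      rw [h1, h2, div_eq_mul_inv]
      ring

set_option maxHeartbeats 1000000 in
/-- if 1/(1+a) has only simple poles inside the contour, at λ₁,…,λ_N, with
residues 1/a'(λ_j) (encoded by the partial-fraction decomposition hypothesis `hpoles`),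
then for F symmetric, holomorphic in each variable and vanishing at coinciding arguments,
(1/n!)∮_{C^n} ∏ dω_j/(2πi(1+a(ω_j)))·F(ω) = Σ_{|S|=n} F((λ_j)_{j∈S})/∏_{j∈S} a'(λ_j). -/
theorem stmt5 (c : ℂ) (R : ℝ) (hR : 0 < R) (N n : ℕ) (a : ℂ → ℂ)
    (lam : Fin N → ℂ) (hlam : ∀ j, lam j ∈ ball c R)
    (hlam' : Function.Injective lam)
    (hder : ∀ j, deriv a (lam j) ≠ 0)
    (g : ℂ → ℂ) (hg : DifferentiableOn ℂ g (closedBall c R))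
    (hpoles : ∀ z ∈ closedBall c R, (∀ j, z ≠ lam j) →
      1 / (1 + a z) = g z + ∑ j, 1 / (deriv a (lam j) * (z - lam j)))
    (F : (Fin n → ℂ) → ℂ)
    (hFhol : ∀ (i : Fin n) (w : Fin n → ℂ), (∀ j, w j ∈ closedBall c R) →
      DifferentiableOn ℂ (fun z => F (Function.update w i z)) (closedBall c R))
    (hFsym : ∀ (σ : Equiv.Perm (Fin n)) (w : Fin n → ℂ), F (w ∘ σ) = F w)
    (hFvan : ∀ (w : Fin n → ℂ) (i j : Fin n), i ≠ j → w i = w j → F w = 0) :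
    (1 / (n.factorial : ℂ)) *
      iterCircleInt c R n
        (fun w => F w * ∏ j, 1 / (2 * Real.pi * Complex.I * (1 + a (w j)))) =
    ∑ S : {S : Finset (Fin N) // S.card = n},
      F (fun i => lam ((S.1.orderIsoOfFin S.2 i : Fin N))) /
        ∏ j ∈ S.1, deriv a (lam j) := by
  classical
  rw [iter_eq c R hR a lam hlam g hg hpoles n F hFhol]
  have hterm0 : ∀ f : Fin n → Fin N, ¬ Function.Injective f →
      F (lam ∘ f) * ∏ i, (deriv a (lam (f i)))⁻¹ = 0 := by
    intro f hf
    obtain ⟨i, j, hij, hne⟩ := Function.not_injective_iff.mp hf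
    rw [hFvan (lam ∘ f) i j hne (congrArg lam hij), zero_mul]
  have h1 : ∑ f : Fin n → Fin N, F (lam ∘ f) * ∏ i, (deriv a (lam (f i)))⁻¹ =
      ∑ f ∈ Finset.univ.filter (fun f : Fin n → Fin N => Function.Injective f),
        F (lam ∘ f) * ∏ i, (deriv a (lam (f i)))⁻¹ :=
    (Finset.sum_filter_of_ne (fun f _ hne => by
      by_contra hni; exact hne (hterm0 f hni))).symm
  rw [h1, Finset.sum_subtype (p := fun f : Fin n → Fin N => Function.Injective f)
    (Finset.univ.filter (fun f : Fin n → Fin N => Function.Injective f))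
    (fun f => by simp)
    (fun f : Fin n → Fin N => F (lam ∘ f) * ∏ i, (deriv a (lam (f i)))⁻¹)]
  -- the bijection between (subset, permutation) pairs and injective functions
  let e : {S : Finset (Fin N) // S.card = n} × Equiv.Perm (Fin n) →
      {f : Fin n → Fin N // Function.Injective f} := fun p =>
    ⟨fun i => (p.1.1.orderIsoOfFin p.1.2 (p.2 i) : Fin N), by
      intro i j hij
      exact p.2.injective ((p.1.1.orderIsoOfFin p.1.2).injective (Subtype.coe_injective hij))⟩
  have himg : ∀ (S : Finset (Fin N)) (hS : S.card = n) (σ : Equiv.Perm (Fin n)),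
      Finset.image (fun i => ((S.orderIsoOfFin hS) (σ i) : Fin N)) Finset.univ = S := by
    intro S hS σ
    ext x
    simp only [Finset.mem_image, Finset.mem_univ, true_and]
    constructor
    · rintro ⟨i, rfl⟩; exact (S.orderIsoOfFin hS (σ i)).2
    · intro hx
      exact ⟨σ.symm ((S.orderIsoOfFin hS).symm ⟨x, hx⟩), by simp⟩
  have hbij : Function.Bijective e := by
    constructor
    · rintro ⟨⟨S, hS⟩, σ⟩ ⟨⟨S', hS'⟩, σ'⟩ hpe
      have hfun : (fun i => ((S.orderIsoOfFin hS) (σ i) : Fin N)) =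
          (fun i => ((S'.orderIsoOfFin hS') (σ' i) : Fin N)) := congrArg Subtype.val hpe
      have hSS : S = S' := by rw [← himg S hS σ, ← himg S' hS' σ', hfun]
      subst hSS
      have hσ : σ = σ' := by
        ext i
        have h5 := congrFun hfun i
        exact congrArg Fin.val ((S.orderIsoOfFin hS).injective (Subtype.coe_injective h5))
      exact Prod.ext (Subtype.ext rfl) hσ
    · rintro ⟨f, hf⟩
      have hS : (Finset.image f Finset.univ).card = n := by
        rw [Finset.card_image_of_injective _ hf, Finset.card_univ, Fintype.card_fin]
      set S := Finset.image f Finset.univ with hSdef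
      have hmemf : ∀ i, f i ∈ S := fun i => Finset.mem_image_of_mem f (Finset.mem_univ i)
      have hf' : Function.Injective (fun i => (⟨f i, hmemf i⟩ : {x // x ∈ S})) :=
        fun i j hij => hf (congrArg Subtype.val hij)
      have hbf' : Function.Bijective (fun i => (⟨f i, hmemf i⟩ : {x // x ∈ S})) := by
        rw [Fintype.bijective_iff_injective_and_card]
        exact ⟨hf', by simp [Fintype.card_coe, hS]⟩
      refine ⟨⟨⟨S, hS⟩, (Equiv.ofBijective _ hbf').trans (S.orderIsoOfFin hS).toEquiv.symm⟩, ?_⟩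
      apply Subtype.ext
      funext i
      show ((S.orderIsoOfFin hS)
        ((S.orderIsoOfFin hS).toEquiv.symm ((Equiv.ofBijective _ hbf') i)) : Fin N) = f i
      simp
  rw [← Fintype.sum_bijective e hbij
    (fun p : {S : Finset (Fin N) // S.card = n} × Equiv.Perm (Fin n) =>
      F (lam ∘ fun i => ((p.1.1.orderIsoOfFin p.1.2) (p.2 i) : Fin N)) *
        ∏ i, (deriv a (lam ((p.1.1.orderIsoOfFin p.1.2) (p.2 i) : Fin N)))⁻¹)
    (fun x : {f : Fin n → Fin N // Function.Injective f} =>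
      F (lam ∘ x.1) * ∏ i, (deriv a (lam (x.1 i)))⁻¹)
    (fun p => rfl)]
  rw [Fintype.sum_prod_type]
  have hval : ∀ (S : {S : Finset (Fin N) // S.card = n}) (σ : Equiv.Perm (Fin n)),
      F (lam ∘ fun i => ((S.1.orderIsoOfFin S.2) (σ i) : Fin N)) *
        ∏ i, (deriv a (lam ((S.1.orderIsoOfFin S.2) (σ i) : Fin N)))⁻¹ =
      F (fun i => lam ((S.1.orderIsoOfFin S.2 i : Fin N))) / ∏ j ∈ S.1, deriv a (lam j) := by
    intro S σ
    have hA : lam ∘ (fun i => ((S.1.orderIsoOfFin S.2) (σ i) : Fin N)) =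
        (fun i => lam ((S.1.orderIsoOfFin S.2 i : Fin N))) ∘ σ := rfl
    rw [hA, hFsym σ]
    rw [Equiv.prod_comp σ (fun i => (deriv a (lam ((S.1.orderIsoOfFin S.2 i : Fin N))))⁻¹)]
    have hC : ∏ i, (deriv a (lam ((S.1.orderIsoOfFin S.2 i : Fin N))))⁻¹ =
        ∏ j ∈ S.1, (deriv a (lam j))⁻¹ := by
      rw [← Finset.prod_coe_sort S.1 (fun j => (deriv a (lam j))⁻¹)]
      exact Fintype.prod_equiv (S.1.orderIsoOfFin S.2).toEquiv _ _ (fun i => rfl)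
    rw [hC, Finset.prod_inv_distrib, div_eq_mul_inv]
  have hrow : ∀ S : {S : Finset (Fin N) // S.card = n},
      ∑ σ : Equiv.Perm (Fin n),
        (F (lam ∘ fun i => ((S.1.orderIsoOfFin S.2) (σ i) : Fin N)) *
          ∏ i, (deriv a (lam ((S.1.orderIsoOfFin S.2) (σ i) : Fin N)))⁻¹) =
      (n.factorial : ℂ) *
        (F (fun i => lam ((S.1.orderIsoOfFin S.2 i : Fin N))) / ∏ j ∈ S.1, deriv a (lam j)) := by
    intro S
    rw [Finset.sum_congr rfl fun σ _ => hval S σ, Finset.sum_const, Finset.card_univ,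
      Fintype.card_perm, Fintype.card_fin, nsmul_eq_mul]
  rw [Finset.sum_congr rfl fun S _ => hrow S, Finset.mul_sum]
  refine Finset.sum_congr rfl fun S _ => ?_
  rw [← mul_assoc, one_div, inv_mul_cancel₀ (Nat.cast_ne_zero.mpr n.factorial_ne_zero), one_mul]
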